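/- Let G be a finite group, p a prime not dividing |G|, and X a conjugacy class of G. Then in the group ring ℤG, X̲^p ≡ X^{(p)}̲ (mod p), i.e., every coefficient of the element X̲^p − X^{(p)}̲ is divisible by p. -/

import Mathlib

open scoped Pointwise

/-- The sum `X̲ = ∑_{x ∈ X} x` of a subset `X` of `G`, as an element of the
integral group ring `ℤG = MonoidAlgebra ℤ G`. -/
noncomputable def clsSum {G : Type*} [Group G] [DecidableEq G] (X : Finset G) : MonoidAlgebra ℤ G :=
  ∑ x ∈ X, MonoidAlgebra.single x 1

/-- A Schur ring (S-ring) over a finite group `G`: a partition `S` of `G` into nonempty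
classes such that `{1} ∈ S`, `S` is closed under taking inverses of classes, and the
`ℤ`-span of the class sums is closed under multiplication (hence a subring of `ℤG`). -/
structure SRing (G : Type*) [Group G] [Fintype G] [DecidableEq G] where
  S : Finset (Finset G)
  nonempty_mem : ∀ X ∈ S, X.Nonempty
  cover : ∀ g : G, ∃! X : Finset G, X ∈ S ∧ g ∈ X
  one_mem : ({1} : Finset G) ∈ S
  inv_mem : ∀ X ∈ S, X⁻¹ ∈ S
  mul_closed : ∀ ξ η : MonoidAlgebra ℤ G,
    ξ ∈ Submodule.span ℤ (clsSum '' (S : Set (Finset G))) →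
    η ∈ Submodule.span ℤ (clsSum '' (S : Set (Finset G))) →
    ξ * η ∈ Submodule.span ℤ (clsSum '' (S : Set (Finset G)))

namespace SRing

variable {G : Type*} [Group G] [Fintype G] [DecidableEq G]

/-- The underlying `ℤ`-module of the S-ring `A` inside `ℤG`. -/
noncomputable def span (A : SRing G) : Submodule ℤ (MonoidAlgebra ℤ G) :=
  Submodule.span ℤ (clsSum '' (A.S : Set (Finset G)))

/-- An S-ring is central if it is contained in the center of `ℤG`. -/
def IsCentral (A : SRing G) : Prop :=
  ∀ ξ ∈ A.span, ∀ η : MonoidAlgebra ℤ G, ξ * η = η * ξ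

/-- A set `T ⊆ G` is an `A`-set if it is a union of basic sets of `A`. -/
def IsASet (A : SRing G) (T : Set G) : Prop :=
  ∀ X ∈ A.S, (∃ x ∈ X, x ∈ T) → ∀ x ∈ X, x ∈ T

/-- An S-ring is primitive if its only `A`-subgroups are trivial. -/
def IsPrimitive (A : SRing G) : Prop :=
  ∀ H : Subgroup G, A.IsASet (H : Set G) → H = ⊥ ∨ H = ⊤

end SRing

/-- The conjugacy class of `g` in `G`, as a finset. -/
def conjClass {G : Type*} [Group G] [Fintype G] [DecidableEq G] (g : G) : Finset G :=
  Finset.univ.filter (fun h => ∃ c : G, c * g * c⁻¹ = h)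

section Aux
variable {G : Type*} [Group G] [Fintype G] [DecidableEq G]

lemma mem_conjClass {g h : G} : h ∈ conjClass g ↔ ∃ c : G, c * g * c⁻¹ = h := by
  simp [conjClass]

lemma self_mem_conjClass (g : G) : g ∈ conjClass g :=
  mem_conjClass.mpr ⟨1, by group⟩

lemma conj_mem_conjClass {g x : G} (hx : x ∈ conjClass g) (c : G) :
    c * x * c⁻¹ ∈ conjClass g := by
  obtain ⟨d, rfl⟩ := mem_conjClass.mp hx
  exact mem_conjClass.mpr ⟨c * d, by group⟩

lemma conjClass_eq_of_mem {g h : G} (hh : h ∈ conjClass g) : conjClass h = conjClass g := by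
  obtain ⟨c, rfl⟩ := mem_conjClass.mp hh
  ext x; simp only [mem_conjClass]
  constructor
  · rintro ⟨d, rfl⟩; exact ⟨d * c, by group⟩
  · rintro ⟨d, rfl⟩; exact ⟨d * c⁻¹, by group⟩

lemma image_pow_conjClass (g : G) (n : ℕ) :
    (conjClass g).image (fun x => x ^ n) = conjClass (g ^ n) := by
  ext z
  simp only [Finset.mem_image, mem_conjClass]
  constructor
  · rintro ⟨x, ⟨c, rfl⟩, rfl⟩
    exact ⟨c, conj_pow.symm⟩
  · rintro ⟨c, rfl⟩
    exact ⟨c * g * c⁻¹, ⟨c, rfl⟩, conj_pow⟩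

lemma conjClass_eq_orbit (g : G) :
    (conjClass g : Set G) = MulAction.orbit (ConjAct G) g := by
  ext h
  simp only [Finset.coe_filter, conjClass, Finset.mem_univ, true_and, Set.mem_setOf_eq,
    MulAction.mem_orbit_iff]
  constructor
  · rintro ⟨c, rfl⟩; exact ⟨ConjAct.toConjAct c, by simp [ConjAct.smul_def]⟩
  · rintro ⟨c, rfl⟩; exact ⟨ConjAct.ofConjAct c, by simp [ConjAct.smul_def]⟩

lemma card_conjClass_dvd (g : G) : (conjClass g).card ∣ Fintype.card G := by
  classical
  have h1 : (conjClass g).card = Fintype.card (MulAction.orbit (ConjAct G) g) := by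
    rw [← Set.toFinset_card]
    congr 1
    rw [← conjClass_eq_orbit]
    simp
  rw [h1, ← ConjAct.card (G := G)]
  exact ⟨_, (MulAction.card_orbit_mul_card_stabilizer_eq_card_group (ConjAct G) g).symm⟩

omit [Fintype G] in
lemma clsSum_pow (X : Finset G) (n : ℕ) :
    clsSum X ^ n = ∑ g ∈ Fintype.piFinset (fun _ : Fin n => X),
      MonoidAlgebra.single ((List.ofFn g).prod) 1 := by
  induction n with
  | zero => simp [MonoidAlgebra.one_def]
  | succ n ih =>
    rw [pow_succ', ih, clsSum, Finset.sum_mul_sum, ← Finset.sum_product']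
    refine Finset.sum_nbij' (fun q => Fin.cons q.1 q.2) (fun g => (g 0, fun i => g i.succ))
      ?_ ?_ ?_ ?_ ?_
    · rintro ⟨x, g⟩ hq
      simp only [Finset.mem_product, Fintype.mem_piFinset] at hq ⊢
      intro i
      refine Fin.cases ?_ ?_ i
      · simpa using hq.1
      · intro j; simpa using hq.2 j
    · intro g hg
      simp only [Fintype.mem_piFinset] at hg ⊢
      exact Finset.mk_mem_product (hg 0) (Fintype.mem_piFinset.mpr fun i => hg i.succ)
    · rintro ⟨x, g⟩ _
      simp
    · intro g _
      exact Fin.cons_self_tail g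
    · rintro ⟨x, g⟩ _
      rw [MonoidAlgebra.single_mul_single, one_mul]
      congr 1
      rw [List.ofFn_succ]
      simp

omit [Fintype G] in
lemma conj_ofFn_prod {n : ℕ} (c : G) (g : Fin n → G) :
    (List.ofFn (fun i => c * g i * c⁻¹)).prod = c * (List.ofFn g).prod * c⁻¹ := by
  have h : (fun i => c * g i * c⁻¹) = (⇑(MulAut.conj c)) ∘ g := by
    funext i; simp [MulAut.conj_apply]
  rw [h, ← List.map_ofFn, ← map_list_prod (MulAut.conj c) (List.ofFn g)]
  simp

omit [Group G] [Fintype G] [DecidableEq G] in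
lemma ofFn_rot {p : ℕ} [NeZero p] (g : Fin p → G) (k : Fin p) :
    List.ofFn (fun i => g (i + k)) = (List.ofFn g).rotate k.val := by
  apply List.ext_getElem
  · simp
  · intro i h1 h2
    simp only [List.getElem_ofFn, List.getElem_rotate, List.length_ofFn]
    congr 1

omit [Fintype G] [DecidableEq G] in
lemma rot_prod_conj {p : ℕ} [NeZero p] (g : Fin p → G) (k : Fin p) :
    ∃ a : G, (List.ofFn (fun i => g (i + k))).prod = a * (List.ofFn g).prod * a⁻¹ := by
  rw [ofFn_rot]
  set l := List.ofFn g with hl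
  have hk : (k : ℕ) ≤ l.length := by
    have := k.isLt
    simp only [hl, List.length_ofFn]
    omega
  refine ⟨(l.take k.val).prod⁻¹, ?_⟩
  rw [List.rotate_eq_drop_append_take hk, List.prod_append]
  have : l.prod = (l.take k.val).prod * (l.drop k.val).prod := by
    rw [← List.prod_append, List.take_append_drop]
  rw [this]
  group

end Aux

/-- The rotation action of `Multiplicative (Fin p)` on a rotation-stable finset of tuples. -/
def rotAction {α : Type*} {p : ℕ} [NeZero p] (Sc : Finset (Fin p → α))
    (hSc : ∀ g ∈ Sc, ∀ k : Fin p, (fun i => g (i + k)) ∈ Sc) :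
    MulAction (Multiplicative (Fin p)) {g // g ∈ Sc} where
  smul k g := ⟨fun i => g.1 (i + k.toAdd), hSc g.1 g.2 _⟩
  one_smul g := by
    ext i
    show g.1 (i + (1 : Multiplicative (Fin p)).toAdd) = g.1 i
    rw [toAdd_one, add_zero]
  mul_smul k l g := by
    ext i
    show g.1 (i + (k * l).toAdd) = g.1 (i + k.toAdd + l.toAdd)
    rw [toAdd_mul, add_assoc]

/-- If `p` is a prime not dividing `|G|` and `X` is a conjugacy class of `G`, then
`X̲^p ≡ X^{(p)}̲ (mod p)` in `ℤG`: every coefficient of `X̲^p − X^{(p)}̲` is divisible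
by `p`. -/
theorem classSum_pow_congruent {G : Type*} [Group G] [Fintype G] [DecidableEq G]
    (p : ℕ) (hp : p.Prime) (hnd : ¬ p ∣ Fintype.card G)
    (X : Finset G) (hX : ∃ g : G, X = conjClass g) :
    ∀ y : G, (p : ℤ) ∣ (clsSum X ^ p - clsSum (X.image (fun x => x ^ p))).coeff y := by
  classical
  intro y
  obtain ⟨g₀, rfl⟩ := hX
  set X := conjClass g₀ with hXdef
  haveI : NeZero p := ⟨hp.ne_zero⟩
  haveI : Fact p.Prime := ⟨hp⟩
  -- notation
  set C : Finset G := conjClass y with hC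
  set N : G → ℕ := fun y' =>
    ((Fintype.piFinset fun _ : Fin p => X).filter (fun g => (List.ofFn g).prod = y')).card with hN
  set Sc : Finset (Fin p → G) :=
    (Fintype.piFinset fun _ : Fin p => X).filter (fun g => (List.ofFn g).prod ∈ C) with hSc
  set Xc : Finset G := X.filter (fun x => x ^ p ∈ C) with hXc
  have hXconj : ∀ x ∈ X, ∀ c : G, c * x * c⁻¹ ∈ X := fun x hx c => conj_mem_conjClass hx c
  -- N is a class function
  have hNconj : ∀ (c y' : G), N (c * y' * c⁻¹) = N y' := by
    intro c y'
    simp only [hN]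
    refine Finset.card_nbij' (fun g => fun i => c⁻¹ * g i * c) (fun g => fun i => c * g i * c⁻¹)
      ?_ ?_ ?_ ?_
    · intro g hg
      simp only [Finset.mem_coe, Finset.mem_filter, Fintype.mem_piFinset] at hg ⊢
      refine ⟨fun i => by simpa using hXconj _ (hg.1 i) c⁻¹, ?_⟩
      have hcp := conj_ofFn_prod c⁻¹ g
      rw [inv_inv] at hcp
      rw [hcp, hg.2]
      group
    · intro g hg
      simp only [Finset.mem_coe, Finset.mem_filter, Fintype.mem_piFinset] at hg ⊢
      refine ⟨fun i => hXconj _ (hg.1 i) c, ?_⟩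
      rw [conj_ofFn_prod, hg.2]
    · intro g _; funext i; group
    · intro g _; funext i; group
  -- rotation stability
  have hrot : ∀ g ∈ Sc, ∀ k : Fin p, (fun i => g (i + k)) ∈ Sc := by
    intro g hg k
    simp only [hSc, Finset.mem_filter, Fintype.mem_piFinset] at hg ⊢
    obtain ⟨a, ha⟩ := rot_prod_conj g k
    exact ⟨fun i => hg.1 _, by rw [ha]; exact conj_mem_conjClass hg.2 a⟩
  letI : MulAction (Multiplicative (Fin p)) {g // g ∈ Sc} := rotAction Sc hrot
  -- fixed points are constant tuples
  have hfix : Nat.card (MulAction.fixedPoints (Multiplicative (Fin p)) {g // g ∈ Sc})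
      = Xc.card := by
    rw [← Nat.card_eq_finsetCard]
    refine Nat.card_eq_of_bijective (fun g => ⟨g.1.1 0, ?_⟩) ⟨?_, ?_⟩
    · -- membership
      obtain ⟨⟨g, hgSc⟩, hgfix⟩ := g
      have hconst : ∀ i : Fin p, g i = g 0 := by
        intro i
        have h2 : g (0 + i) = g 0 :=
          congrFun (congrArg Subtype.val (hgfix (Multiplicative.ofAdd i))) 0
        rwa [zero_add] at h2
      simp only [hSc, Finset.mem_filter, Fintype.mem_piFinset] at hgSc
      have hg' : g = fun _ => g 0 := funext hconst
      simp only [hXc, Finset.mem_filter]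
      refine ⟨hgSc.1 0, ?_⟩
      have := hgSc.2
      rw [hg', List.ofFn_const, List.prod_replicate] at this
      exact this
    · rintro ⟨⟨g, hgSc⟩, hgfix⟩ ⟨⟨h, hhSc⟩, hhfix⟩ heq
      have hconstg : ∀ i : Fin p, g i = g 0 := fun i => by
        have h2 : g (0 + i) = g 0 :=
          congrFun (congrArg Subtype.val (hgfix (Multiplicative.ofAdd i))) 0
        rwa [zero_add] at h2
      have hconsth : ∀ i : Fin p, h i = h 0 := fun i => by
        have h2 : h (0 + i) = h 0 :=
          congrFun (congrArg Subtype.val (hhfix (Multiplicative.ofAdd i))) 0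
        rwa [zero_add] at h2
      have h0 : g 0 = h 0 := congrArg Subtype.val heq
      ext1; ext1; funext i
      show g i = h i
      rw [hconstg i, hconsth i, h0]
    · rintro ⟨x, hx⟩
      simp only [hXc, Finset.mem_filter] at hx
      have hmem : (fun _ : Fin p => x) ∈ Sc := by
        simp only [hSc, Finset.mem_filter, Fintype.mem_piFinset]
        exact ⟨fun _ => hx.1, by rw [List.ofFn_const, List.prod_replicate]; exact hx.2⟩
      refine ⟨⟨⟨fun _ => x, hmem⟩, ?_⟩, rfl⟩
      intro k
      ext1
      funext i
      rfl
  -- p-group modular counting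
  have hpgrp : IsPGroup p (Multiplicative (Fin p)) :=
    IsPGroup.of_card (n := 1) (by simp)
  have hmod := hpgrp.card_modEq_card_fixedPoints (α := {g // g ∈ Sc})
  rw [hfix, Nat.card_eq_finsetCard] at hmod
  -- Sc.card = C.card * N y
  have hScCard : Sc.card = C.card * N y := by
    rw [Finset.card_eq_sum_card_fiberwise
      (f := fun g : Fin p → G => (List.ofFn g).prod) (t := C)
      (fun g hg => Finset.mem_coe.mpr (Finset.mem_filter.mp (Finset.mem_coe.mp hg)).2)]
    have hterm : ∀ y' ∈ C, (Sc.filter fun g => (List.ofFn g).prod = y').card = N y := by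
      intro y' hy'
      have h1 : Sc.filter (fun g => (List.ofFn g).prod = y')
          = (Fintype.piFinset fun _ : Fin p => X).filter
              (fun g => (List.ofFn g).prod = y') := by
        rw [hSc, Finset.filter_filter]
        apply Finset.filter_congr
        intro g _
        constructor
        · rintro ⟨_, h⟩; exact h
        · rintro h; exact ⟨h ▸ hy', h⟩
      rw [h1]
      obtain ⟨c, rfl⟩ := mem_conjClass.mp hy'
      exact hNconj c y
    rw [Finset.sum_congr rfl hterm, Finset.sum_const, smul_eq_mul]
  -- Xc.card
  set d : ℕ := if y ∈ X.image (fun x => x ^ p) then 1 else 0 with hd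
  have himg : X.image (fun x => x ^ p) = conjClass (g₀ ^ p) := image_pow_conjClass g₀ p
  have hXcCard : Xc.card = C.card * d := by
    by_cases hy : y ∈ X.image (fun x => x ^ p)
    · have hyC : conjClass y = conjClass (g₀ ^ p) := conjClass_eq_of_mem (himg ▸ hy)
      have hXcX : Xc = X := by
        rw [hXc]
        apply Finset.filter_true_of_mem
        intro x hx
        have : x ^ p ∈ X.image (fun x => x ^ p) := Finset.mem_image_of_mem _ hx
        rw [himg, ← hyC] at this
        exact this
      have hcop : (Nat.card G).Coprime p := by
        rw [Nat.card_eq_fintype_card, Nat.coprime_comm]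
        exact (hp.coprime_iff_not_dvd).mpr hnd
      have hinj : Function.Injective (fun x : G => x ^ p) := fun a b hab =>
        (powCoprime hcop).injective (by simpa [powCoprime_apply] using hab)
      rw [hXcX, hd, if_pos hy, mul_one, hC, hyC, ← himg,
        Finset.card_image_of_injective _ hinj]
    · have hXcEmpty : Xc = ∅ := by
        rw [hXc]
        apply Finset.filter_false_of_mem
        intro x hx hxp
        apply hy
        have h1 : x ^ p ∈ conjClass (g₀ ^ p) := himg ▸ Finset.mem_image_of_mem _ hx
        have h2 : conjClass (x ^ p) = conjClass (g₀ ^ p) := conjClass_eq_of_mem h1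
        have h3 : conjClass (x ^ p) = conjClass y := conjClass_eq_of_mem hxp
        rw [himg]
        have hself : y ∈ conjClass y := self_mem_conjClass y
        rw [← h3, h2] at hself
        exact hself
      rw [hXcEmpty, hd, if_neg hy, mul_zero, Finset.card_empty]
  -- coefficients
  have hcoeff1 : (clsSum X ^ p).coeff y = (N y : ℤ) := by
    rw [clsSum_pow, hN]
    rw [MonoidAlgebra.coeff_sum, Finset.sum_apply']
    simp only [MonoidAlgebra.coeff_single, Finsupp.single_apply]
    rw [Finset.sum_boole]
  have hcoeff2 : (clsSum (X.image fun x => x ^ p)).coeff y = (d : ℤ) := by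
    rw [clsSum, MonoidAlgebra.coeff_sum, Finset.sum_apply']
    simp only [MonoidAlgebra.coeff_single, Finsupp.single_apply]
    rw [Finset.sum_ite_eq', hd]
    split <;> simp
  -- arithmetic conclusion
  have hdvd0 : (p : ℤ) ∣ (Xc.card : ℤ) - (Sc.card : ℤ) := (Nat.modEq_iff_dvd).mp hmod
  have hdvd : (p : ℤ) ∣ (C.card : ℤ) * ((d : ℤ) - (N y : ℤ)) := by
    have heq : (C.card : ℤ) * ((d : ℤ) - (N y : ℤ))
        = (Xc.card : ℤ) - (Sc.card : ℤ) := by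
      rw [hScCard, hXcCard]; push_cast; ring
    rw [heq]; exact hdvd0
  have hnotdvd : ¬ (p : ℤ) ∣ (C.card : ℤ) := by
    rw [Int.natCast_dvd_natCast]
    intro h
    exact hnd (h.trans (hC ▸ card_conjClass_dvd y))
  have hp' : Prime (p : ℤ) := Nat.prime_iff_prime_int.mp hp
  have hfinal : (p : ℤ) ∣ (d : ℤ) - (N y : ℤ) :=
    (hp'.dvd_mul.mp hdvd).resolve_left hnotdvd
  have hval : (clsSum X ^ p - clsSum (X.image fun x => x ^ p)).coeff y
      = (N y : ℤ) - (d : ℤ) := by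
    rw [MonoidAlgebra.coeff_sub, Finsupp.sub_apply, hcoeff1, hcoeff2]
  rw [hval]
  have := dvd_neg.mpr hfinal
  simpa using this
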